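/- (Micchelli) Let y₁,…,y_s be distinct real numbers, let D^{2m} ∈ ℝ^{s×s} have entries (y_i − y_j)^{2m}, and let P_{m-1} ∈ ℝ^{m×s} be the Vandermonde matrix (y_j^k)_{k=0,…,m-1; j=1,…,s}. Then for every 0 ≤ m ≤ s−1 and every a ∈ ker P_{m-1}: (−1)^m a^T D^{2m} a ≥ 0, with equality if and only if a ∈ ker P_m. -/
import Mathlib

open Matrix

theorem micchelli_lemma (s : ℕ) (hs : 1 ≤ s) (y : Fin s → ℝ)
    (hy : Function.Injective y) (m : ℕ) (hm : m ≤ s - 1)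
    (D2m : Matrix (Fin s) (Fin s) ℝ)
    (hD : ∀ i j, D2m i j = (y i - y j) ^ (2 * m))
    (P : Matrix (Fin m) (Fin s) ℝ) (hP : ∀ (k : Fin m) (j : Fin s), P k j = y j ^ (k : ℕ))
    (P' : Matrix (Fin (m + 1)) (Fin s) ℝ)
    (hP' : ∀ (k : Fin (m + 1)) (j : Fin s), P' k j = y j ^ (k : ℕ))
    (a : Fin s → ℝ) (ha : P.mulVec a = 0) :
    0 ≤ (-1 : ℝ) ^ m * (a ⬝ᵥ D2m.mulVec a) ∧
    ((-1 : ℝ) ^ m * (a ⬝ᵥ D2m.mulVec a) = 0 ↔ P'.mulVec a = 0) := by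
  set c : ℕ → ℝ := fun k => ∑ i, a i * y i ^ k with hcdef
  have hc : ∀ k, k < m → c k = 0 := by
    intro k hk
    have h := congrFun ha ⟨k, hk⟩
    simp only [Matrix.mulVec, dotProduct, hP, Pi.zero_apply] at h
    simpa [hcdef, mul_comm] using h
  have expand : a ⬝ᵥ D2m.mulVec a
      = ∑ k ∈ Finset.range (2*m+1),
          (-1 : ℝ)^(k + 2*m) * c k * c (2*m - k) * ((2*m).choose k) := by
    simp only [dotProduct, Matrix.mulVec, hD, sub_pow, Finset.mul_sum,
      Finset.sum_mul]
    rw [Finset.sum_comm]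
    conv_lhs => enter [2, j]; rw [Finset.sum_comm]
    rw [Finset.sum_comm]
    apply Finset.sum_congr rfl
    intro k _
    simp only [hcdef, Finset.sum_mul, Finset.mul_sum]
    apply Finset.sum_congr rfl
    intro i _
    apply Finset.sum_congr rfl
    intro j _
    ring
  have key : a ⬝ᵥ D2m.mulVec a = (-1 : ℝ)^m * (((2*m).choose m : ℝ) * (c m)^2) := by
    rw [expand, Finset.sum_eq_single m]
    · have h2 : 2*m - m = m := by omega
      rw [h2]
      have h3 : (-1 : ℝ)^(m + 2*m) = (-1)^m := by
        rw [show m + 2*m = m + 2*m from rfl, pow_add]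
        simp [pow_mul]
      rw [h3]; ring
    · intro k hk hne
      rw [Finset.mem_range] at hk
      rcases lt_or_gt_of_ne hne with h | h
      · rw [hc k h]; ring
      · rw [hc (2*m - k) (by omega)]; ring
    · intro h
      exact absurd (Finset.mem_range.mpr (by omega)) h
  have hsq : (-1 : ℝ)^m * (a ⬝ᵥ D2m.mulVec a) = ((2*m).choose m : ℝ) * (c m)^2 := by
    rw [key, ← mul_assoc, ← pow_add]
    simp [pow_mul]
  have hchoose : (0 : ℝ) < ((2*m).choose m : ℝ) := by
    exact_mod_cast Nat.choose_pos (by omega)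
  constructor
  · rw [hsq]; positivity
  · rw [hsq]
    constructor
    · intro h
      have hcm : c m = 0 := by
        have := mul_eq_zero.mp h
        rcases this with h' | h'
        · exact absurd h' (ne_of_gt hchoose)
        · exact pow_eq_zero_iff (n := 2) (by norm_num) |>.mp h'
      funext k
      obtain ⟨k, hk⟩ := k
      simp only [Matrix.mulVec, dotProduct, hP', Pi.zero_apply]
      rcases Nat.lt_or_ge k m with h' | h'
      · have := hc k h'
        simpa [hcdef, mul_comm] using this
      · have : k = m := by omega
        subst this
        simpa [hcdef, mul_comm] using hcm
    · intro h
      have hcm : c m = 0 := by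
        have h' := congrFun h ⟨m, by omega⟩
        simp only [Matrix.mulVec, dotProduct, hP', Pi.zero_apply] at h'
        simpa [hcdef, mul_comm] using h'
      rw [hcm]; ring
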